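/- arXiv:2502.06306 — 2 statements merged into one kernel-verified Lean document; each statement's English description precedes it below -/
import Mathlib

section
/- Let a : ℝ³ → ℝ be a smooth, compactly supported, nonnegative function. Then for every ε > 0 there exists a constant C_ε > 0 such that for all x ∈ ℝ³, ‖∇a(x)‖ ≤ C_ε a(x) + ε. -/
noncomputable section

open MeasureTheory Real Set Filter

/-- `ℝ³` with its euclidean structure. -/
abbrev V3 : Type := EuclideanSpace ℝ (Fin 3)

/-- Partial derivative in direction `i` of a complex-valued function on `ℝ³`. -/
def pd (i : Fin 3) (f : V3 → ℂ) (x : V3) : ℂ :=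
  fderiv ℝ f x (EuclideanSpace.single i 1)

/-- Partial derivative in direction `i` of a real-valued function on `ℝ³`. -/
def pdR (i : Fin 3) (f : V3 → ℝ) (x : V3) : ℝ :=
  fderiv ℝ f x (EuclideanSpace.single i 1)

/-- Time derivative. -/
def timeDeriv (u : ℝ → V3 → ℂ) (t : ℝ) (x : V3) : ℂ :=
  deriv (fun s => u s x) t

/-- `div (G ∇ f) = Σᵢⱼ ∂ᵢ (Gᵢⱼ ∂ⱼ f)` for a complex-valued `f`. -/
def divG (G : V3 → Matrix (Fin 3) (Fin 3) ℝ) (f : V3 → ℂ) (x : V3) : ℂ :=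
  ∑ i, ∑ j, pd i (fun y => (G y i j : ℂ) * pd j f y) x

/-- Squared euclidean norm of the spatial gradient of a complex-valued function. -/
def gradSq (f : V3 → ℂ) (x : V3) : ℝ :=
  ∑ i, ‖pd i f x‖ ^ 2

/-- The structural assumptions on the coefficients `G` (smooth, symmetric, uniformly
elliptic, equal to the identity outside a compact set) and `a` (smooth, nonnegative,
compactly supported). -/
structure Coeffs (G : V3 → Matrix (Fin 3) (Fin 3) ℝ) (a : V3 → ℝ) : Prop where
  G_smooth : ∀ i j, ContDiff ℝ (⊤ : ℕ∞) fun x => G x i j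
  G_symm : ∀ x i j, G x i j = G x j i
  G_elliptic : ∃ c > 0, ∀ (x : V3) (ξ : Fin 3 → ℝ),
    c * ∑ i, ξ i ^ 2 ≤ ∑ i, ∑ j, ξ i * G x i j * ξ j
  G_cpt : IsCompact (closure {x : V3 | G x ≠ 1})
  a_smooth : ContDiff ℝ (⊤ : ℕ∞) a
  a_nonneg : ∀ x, 0 ≤ a x
  a_cpt : HasCompactSupport a

/-- A classical solution of the damped NLS `i ∂ₜ u + div (G ∇ u) + i a u = |u|² u`, the
equation being imposed for times in `s` : it is smooth in `(t, x)`, and all space-time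
derivatives decay in `x` faster than any inverse power of `‖x‖`, locally uniformly in `t`. -/
structure IsSolution (G : V3 → Matrix (Fin 3) (Fin 3) ℝ) (a : V3 → ℝ)
    (s : Set ℝ) (u : ℝ → V3 → ℂ) : Prop where
  smooth : ContDiff ℝ (⊤ : ℕ∞) fun p : ℝ × V3 => u p.1 p.2
  decay : ∀ (n k : ℕ) (K : Set ℝ), IsCompact K → ∃ C : ℝ, ∀ t ∈ K, ∀ x : V3,
    ‖x‖ ^ k * ‖iteratedFDeriv ℝ n (fun p : ℝ × V3 => u p.1 p.2) (t, x)‖ ≤ C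
  eqn : ∀ t ∈ s, ∀ x : V3,
    Complex.I * timeDeriv u t x + divG G (u t) x + Complex.I * (a x : ℂ) * u t x
      = (‖u t x‖ : ℂ) ^ 2 * u t x

/-- The (real) energy `E[f] = ½ ∫ G ∇f · ∇f̄ + ¼ ∫ |f|⁴`. -/
def energy (G : V3 → Matrix (Fin 3) (Fin 3) ℝ) (f : V3 → ℂ) : ℝ :=
  (1 / 2) * (∫ x : V3, ∑ i, ∑ j, G x i j * (pd i f x * (starRingEnd ℂ) (pd j f x)).re)
    + (1 / 4) * ∫ x : V3, ‖f x‖ ^ 4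

/-- `∫ (|f|² + ‖∇f‖²) + ∫ |f|⁴`, the quantity measuring the size of the initial data. -/
def initialData (f : V3 → ℂ) : ℝ :=
  (∫ x : V3, (‖f x‖ ^ 2 + gradSq f x)) + ∫ x : V3, ‖f x‖ ^ 4

/-- For a smooth, compactly supported, nonnegative function `a`, the
gradient is bounded by `C_ε a + ε` for every `ε > 0`. -/
theorem statement9 (a : V3 → ℝ) (ha : ContDiff ℝ (⊤ : ℕ∞) a)
    (ha_nonneg : ∀ x, 0 ≤ a x) (ha_cpt : HasCompactSupport a) :
    ∀ ε > 0, ∃ C > 0, ∀ x : V3, ‖gradient a x‖ ≤ C * a x + ε := by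
  intro ε hε
  have hcont : Continuous (gradient a) :=
    (InnerProductSpace.toDual ℝ V3).symm.continuous.comp (ha.continuous_fderiv (by simp))
  set S : Set V3 := {x | ε ≤ ‖gradient a x‖} with hS
  have hSclosed : IsClosed S := isClosed_le continuous_const (continuous_norm.comp hcont)
  have hgrad_zero : ∀ x : V3, a x = 0 → gradient a x = 0 := by
    intro x hx
    have hloc : IsLocalMin a x :=
      Filter.Eventually.of_forall (fun y => hx ▸ ha_nonneg y)
    have hfd : fderiv ℝ a x = 0 := hloc.fderiv_eq_zero
    simp [gradient, hfd]
  have hSsub : S ⊆ tsupport a := by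
    intro x hx
    by_contra hxn
    have heq : a =ᶠ[nhds x] 0 := notMem_tsupport_iff_eventuallyEq.mp hxn
    have hfd : fderiv ℝ a x = fderiv ℝ (fun _ : V3 => (0 : ℝ)) x := heq.fderiv_eq
    have : gradient a x = 0 := by simp [gradient, hfd]
    have := hx
    rw [hS] at this
    simp only [Set.mem_setOf_eq] at this
    rw [‹gradient a x = 0›] at this
    simp at this
    linarith
  have hScpt : IsCompact S := ha_cpt.of_isClosed_subset hSclosed hSsub
  rcases S.eq_empty_or_nonempty with hSe | hSne
  · refine ⟨1, one_pos, fun x => ?_⟩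
    have hx : x ∉ S := by simp [hSe]
    have hlt : ‖gradient a x‖ < ε := by
      by_contra h
      exact hx (le_of_not_gt h)
    nlinarith [ha_nonneg x]
  · obtain ⟨x₀, hx₀S, hmin⟩ := hScpt.exists_isMinOn hSne ha.continuous.continuousOn
    obtain ⟨x₁, hx₁S, hmax⟩ :=
      hScpt.exists_isMaxOn hSne (continuous_norm.comp hcont).continuousOn
    have hax₀ : 0 < a x₀ := by
      rcases (ha_nonneg x₀).lt_or_eq with h | h
      · exact h
      · exfalso
        have h0 : gradient a x₀ = 0 := hgrad_zero x₀ h.symm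
        have := hx₀S
        rw [hS] at this
        simp only [Set.mem_setOf_eq, h0, norm_zero] at this
        linarith
    refine ⟨‖gradient a x₁‖ / a x₀, div_pos (lt_of_lt_of_le hε hx₁S) hax₀, fun x => ?_⟩
    by_cases hx : x ∈ S
    · have h1 : ‖gradient a x‖ ≤ ‖gradient a x₁‖ := hmax hx
      have h2 : a x₀ ≤ a x := hmin hx
      have h3 : ‖gradient a x₁‖ / a x₀ * a x₀ ≤ ‖gradient a x₁‖ / a x₀ * a x :=
        mul_le_mul_of_nonneg_left h2 (le_of_lt (div_pos (lt_of_lt_of_le hε hx₁S) hax₀))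
      rw [div_mul_cancel₀ _ (ne_of_gt hax₀)] at h3
      linarith
    · have hlt : ‖gradient a x‖ < ε := by
        by_contra h
        exact hx (le_of_not_gt h)
      have : 0 ≤ ‖gradient a x₁‖ / a x₀ * a x :=
        mul_nonneg (le_of_lt (div_pos (lt_of_lt_of_le hε hx₁S) hax₀)) (ha_nonneg x)
      linarith
end
end

section
/- Let u and v be two classical solutions of the damped NLS on [0,T] (with the same G and a). Then for every t ∈ [0,T], d/dt ∫_{ℝ³} |u(t,x) − v(t,x)|² dx ≤ 3 ∫_{ℝ³} ( |u(t,x)|² + |v(t,x)|² ) |u(t,x) − v(t,x)|² dx. -/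
noncomputable section

open MeasureTheory Real Set Filter

namespace NLS18

open ContinuousLinearMap

/-- The derivative of `y ↦ (t, y)`. -/
abbrev Dmk : V3 →L[ℝ] ℝ × V3 := (0 : V3 →L[ℝ] ℝ).prod (ContinuousLinearMap.id ℝ V3)

abbrev e3 (i : Fin 3) : V3 := EuclideanSpace.single i 1

lemma norm_e3 (i : Fin 3) : ‖e3 i‖ = 1 := by
  simp [e3, EuclideanSpace.norm_single]

lemma norm_pair_e3 (i : Fin 3) : ‖((0 : ℝ), e3 i)‖ = 1 := by
  simp [Prod.norm_def, norm_e3]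

lemma hasFDerivAt_mk (t : ℝ) (x : V3) :
    HasFDerivAt (fun y : V3 => ((t, y) : ℝ × V3)) Dmk x :=
  (hasFDerivAt_const t x).prodMk (hasFDerivAt_id x)

section F
variable {F : ℝ × V3 → ℂ}

lemma ple_top : ((⊤ : ℕ∞) : WithTop ℕ∞) ≠ 0 := by simp

lemma psucc_le_top : ((⊤ : ℕ∞) : WithTop ℕ∞) + 1 ≤ ((⊤ : ℕ∞) : WithTop ℕ∞) := by
  exact_mod_cast le_top

lemma contDiff_slice (hF : ContDiff ℝ (⊤ : ℕ∞) F) (t : ℝ) : ContDiff ℝ (⊤ : ℕ∞) (fun y : V3 => F (t, y)) :=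
  hF.comp (contDiff_const.prodMk contDiff_id)

lemma hasFDerivAt_slice (hF : ContDiff ℝ (⊤ : ℕ∞) F) (t : ℝ) (x : V3) :
    HasFDerivAt (fun y : V3 => F (t, y)) ((fderiv ℝ F (t, x)).comp Dmk) x :=
  ((hF.differentiable ple_top (t, x)).hasFDerivAt).comp x (hasFDerivAt_mk t x)

lemma pd_slice (hF : ContDiff ℝ (⊤ : ℕ∞) F) (t : ℝ) (x : V3) (j : Fin 3) :
    pd j (fun y : V3 => F (t, y)) x = fderiv ℝ F (t, x) (0, e3 j) := by
  rw [pd, (hasFDerivAt_slice hF t x).fderiv]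
  simp [Dmk]

lemma pdpd_slice (hF : ContDiff ℝ (⊤ : ℕ∞) F) (t : ℝ) (x : V3) (i j : Fin 3) :
    pd i (pd j (fun y : V3 => F (t, y))) x
      = fderiv ℝ (fderiv ℝ F) (t, x) (0, e3 i) (0, e3 j) := by
  have h1 : pd j (fun y : V3 => F (t, y)) = fun x : V3 => fderiv ℝ F (t, x) (0, e3 j) :=
    funext fun x => pd_slice hF t x j
  have hΦ : ContDiff ℝ (⊤ : ℕ∞) (fderiv ℝ F) := hF.fderiv_right psucc_le_top
  have h2 : HasFDerivAt (fun x : V3 => fderiv ℝ F (t, x))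
      ((fderiv ℝ (fderiv ℝ F) (t, x)).comp Dmk) x :=
    ((hΦ.differentiable ple_top (t, x)).hasFDerivAt).comp x (hasFDerivAt_mk t x)
  have h3 : HasFDerivAt (fun x : V3 => fderiv ℝ F (t, x) ((0 : ℝ), e3 j))
      ((ContinuousLinearMap.apply ℝ ℂ ((0 : ℝ), e3 j)).comp
        ((fderiv ℝ (fderiv ℝ F) (t, x)).comp Dmk)) x :=
    (ContinuousLinearMap.apply ℝ ℂ ((0 : ℝ), e3 j)).hasFDerivAt.comp x h2
  rw [pd, h1, h3.fderiv]
  simp [Dmk]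

lemma timeDeriv_slice (hF : ContDiff ℝ (⊤ : ℕ∞) F) (t : ℝ) (x : V3) :
    deriv (fun s : ℝ => F (s, x)) t = fderiv ℝ F (t, x) (1, (0 : V3)) := by
  have h : HasDerivAt (fun s : ℝ => ((s, x) : ℝ × V3)) (1, (0 : V3)) t :=
    (hasDerivAt_id t).prodMk (hasDerivAt_const t x)
  exact ((hF.differentiable ple_top (t, x)).hasFDerivAt.comp_hasDerivAt t h).deriv

end F

lemma norm_fderiv_apply_le (f : ℝ × V3 → ℂ) (p : ℝ × V3) (w : ℝ × V3) :
    ‖fderiv ℝ f p w‖ ≤ ‖iteratedFDeriv ℝ 1 f p‖ * ‖w‖ := by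
  have h := (iteratedFDeriv ℝ 1 f p).le_opNorm ![w]
  simpa using h

lemma norm_fderiv2_apply_le (f : ℝ × V3 → ℂ) (p : ℝ × V3) (w1 w2 : ℝ × V3) :
    ‖fderiv ℝ (fderiv ℝ f) p w1 w2‖ ≤ ‖iteratedFDeriv ℝ 2 f p‖ * ‖w1‖ * ‖w2‖ := by
  have h := (iteratedFDeriv ℝ 2 f p).le_opNorm ![w1, w2]
  rw [iteratedFDeriv_two_apply] at h
  simpa [Fin.prod_univ_two, mul_assoc] using h

end NLS18
namespace NLS18

open MeasureTheory

/-- A continuous function decaying faster than any inverse power of the norm. -/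
structure SD {E : Type*} [NormedAddCommGroup E] (f : V3 → E) : Prop where
  cont : Continuous f
  bdd : ∀ k : ℕ, ∃ C : ℝ, ∀ x : V3, ‖x‖ ^ k * ‖f x‖ ≤ C

namespace SD

variable {E : Type*} [NormedAddCommGroup E] {f g : V3 → E}

lemma bdd' (h : SD f) (k : ℕ) : ∃ C : ℝ, 0 ≤ C ∧ ∀ x : V3, ‖x‖ ^ k * ‖f x‖ ≤ C := by
  obtain ⟨C, hC⟩ := h.bdd k
  exact ⟨max C 0, le_max_right _ _, fun x => le_trans (hC x) (le_max_left _ _)⟩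

lemma congr (h : SD f) (hfg : ∀ x, f x = g x) : SD g := by
  have : f = g := funext hfg
  rwa [this] at h

lemma sub (hf : SD f) (hg : SD g) : SD (fun x => f x - g x) where
  cont := hf.cont.sub hg.cont
  bdd k := by
    obtain ⟨C, -, hC⟩ := hf.bdd' k
    obtain ⟨D, -, hD⟩ := hg.bdd' k
    refine ⟨C + D, fun x => ?_⟩
    calc ‖x‖ ^ k * ‖f x - g x‖ ≤ ‖x‖ ^ k * (‖f x‖ + ‖g x‖) := by
          gcongr; exact norm_sub_le _ _
      _ = ‖x‖ ^ k * ‖f x‖ + ‖x‖ ^ k * ‖g x‖ := by ring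
      _ ≤ C + D := add_le_add (hC x) (hD x)

lemma add (hf : SD f) (hg : SD g) : SD (fun x => f x + g x) where
  cont := hf.cont.add hg.cont
  bdd k := by
    obtain ⟨C, -, hC⟩ := hf.bdd' k
    obtain ⟨D, -, hD⟩ := hg.bdd' k
    refine ⟨C + D, fun x => ?_⟩
    calc ‖x‖ ^ k * ‖f x + g x‖ ≤ ‖x‖ ^ k * (‖f x‖ + ‖g x‖) := by
          gcongr; exact norm_add_le _ _
      _ = ‖x‖ ^ k * ‖f x‖ + ‖x‖ ^ k * ‖g x‖ := by ring
      _ ≤ C + D := add_le_add (hC x) (hD x)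

lemma norm (h : SD f) : SD (fun x => ‖f x‖) where
  cont := h.cont.norm
  bdd k := by
    obtain ⟨C, hC⟩ := h.bdd k
    exact ⟨C, fun x => by simpa using hC x⟩

lemma mul {𝕜 : Type*} [NormedRing 𝕜] {f g : V3 → 𝕜} (hf : SD f) (hg : SD g) :
    SD (fun x => f x * g x) where
  cont := hf.cont.mul hg.cont
  bdd k := by
    obtain ⟨C, hC0, hC⟩ := hf.bdd' k
    obtain ⟨D, -, hD⟩ := hg.bdd' 0
    have hD' : ∀ x, ‖g x‖ ≤ D := fun x => by simpa using hD x
    refine ⟨C * D, fun x => ?_⟩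
    calc ‖x‖ ^ k * ‖f x * g x‖ ≤ ‖x‖ ^ k * (‖f x‖ * ‖g x‖) := by
          gcongr; exact norm_mul_le _ _
      _ = ‖x‖ ^ k * ‖f x‖ * ‖g x‖ := by ring
      _ ≤ C * D := mul_le_mul (hC x) (hD' x) (norm_nonneg _) hC0

lemma bdd_mul {𝕜 : Type*} [NormedRing 𝕜] {f g : V3 → 𝕜} (hg : Continuous g)
    (hgb : ∃ D : ℝ, ∀ x, ‖g x‖ ≤ D) (hf : SD f) : SD (fun x => g x * f x) where
  cont := hg.mul hf.cont
  bdd k := by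
    obtain ⟨C, hC0, hC⟩ := hf.bdd' k
    obtain ⟨D, hD⟩ := hgb
    refine ⟨D * C, fun x => ?_⟩
    calc ‖x‖ ^ k * ‖g x * f x‖ ≤ ‖x‖ ^ k * (‖g x‖ * ‖f x‖) := by
          gcongr; exact norm_mul_le _ _
      _ = ‖g x‖ * (‖x‖ ^ k * ‖f x‖) := by ring
      _ ≤ D * C := mul_le_mul (hD x) (hC x) (by positivity) ((norm_nonneg (g 0)).trans (hD 0))

lemma conj {f : V3 → ℂ} (h : SD f) : SD (fun x => (starRingEnd ℂ) (f x)) where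
  cont := Complex.continuous_conj.comp h.cont
  bdd k := by
    obtain ⟨C, hC⟩ := h.bdd k
    exact ⟨C, fun x => by simpa using hC x⟩

lemma re {f : V3 → ℂ} (h : SD f) : SD (fun x => (f x).re) where
  cont := Complex.continuous_re.comp h.cont
  bdd k := by
    obtain ⟨C, hC⟩ := h.bdd k
    refine ⟨C, fun x => le_trans ?_ (hC x)⟩
    gcongr
    exact Complex.abs_re_le_norm _

lemma ofReal {f : V3 → ℝ} (h : SD f) : SD (fun x => ((f x : ℝ) : ℂ)) where
  cont := Complex.continuous_ofReal.comp h.cont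
  bdd k := by
    obtain ⟨C, hC⟩ := h.bdd k
    exact ⟨C, fun x => by simpa using hC x⟩

lemma const_mul {f : V3 → ℂ} (h : SD f) (c : ℂ) : SD (fun x => c * f x) :=
  bdd_mul continuous_const ⟨‖c‖, fun _ => le_rfl⟩ h

lemma const_mulR {f : V3 → ℝ} (h : SD f) (c : ℝ) : SD (fun x => c * f x) :=
  bdd_mul continuous_const ⟨‖c‖, fun _ => le_rfl⟩ h

end SD

lemma pow4_bound {r : ℝ} (hr : 0 ≤ r) : (1 + r) ^ 4 ≤ 8 * (1 + r ^ 4) := by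
  nlinarith [sq_nonneg (1 - r), sq_nonneg (1 - r ^ 2), sq_nonneg (1 + r), sq_nonneg (1 + r ^ 2), sq_nonneg r, sq_nonneg (r - r ^ 2)]

lemma norm_one_zero : ‖((1 : ℝ), (0 : V3))‖ = 1 := by simp [Prod.norm_def]

lemma integrable_japanese : Integrable (fun x : V3 => ((1 + ‖x‖) ^ 4)⁻¹) (volume : Measure V3) := by
  have h : ((Module.finrank ℝ V3 : ℝ) < (4 : ℝ)) := by
    simp only [finrank_euclideanSpace, Fintype.card_fin]
    norm_num
  have h2 := integrable_one_add_norm (E := V3) (μ := volume) h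
  refine h2.congr (Filter.Eventually.of_forall fun x => ?_)
  have hx : (0:ℝ) < 1 + ‖x‖ := by positivity
  show (1 + ‖x‖) ^ (-(4:ℝ)) = ((1 + ‖x‖) ^ 4)⁻¹
  rw [Real.rpow_neg hx.le]
  rw [← Real.rpow_natCast]
  norm_num

lemma SD.integrable {E : Type*} [NormedAddCommGroup E] {f : V3 → E} (h : SD f) :
    Integrable f (volume : Measure V3) := by
  obtain ⟨C0, hC00, hC0⟩ := h.bdd' 0
  obtain ⟨C4, hC40, hC4⟩ := h.bdd' 4
  refine (integrable_japanese.const_mul (8 * (C0 + C4))).mono'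
    h.cont.aestronglyMeasurable (Filter.Eventually.of_forall fun x => ?_)
  have h0 : ‖f x‖ ≤ C0 := by simpa using hC0 x
  have h4 : ‖x‖ ^ 4 * ‖f x‖ ≤ C4 := hC4 x
  have hr : (0:ℝ) ≤ ‖x‖ := norm_nonneg x
  have hfx : (0:ℝ) ≤ ‖f x‖ := norm_nonneg _
  have hpos : (0:ℝ) < (1 + ‖x‖) ^ 4 := by positivity
  have key : ‖f x‖ * (1 + ‖x‖) ^ 4 ≤ 8 * (C0 + C4) := by
    have e1 : (1 + ‖x‖) ^ 2 ≤ 2 * (1 + ‖x‖ ^ 2) := by nlinarith [sq_nonneg (1 - ‖x‖)]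
    have e2 : (1 + ‖x‖ ^ 2) ^ 2 ≤ 2 * (1 + ‖x‖ ^ 4) := by nlinarith [sq_nonneg (1 - ‖x‖ ^ 2)]
    have e3 : (1 + ‖x‖) ^ 4 ≤ 8 * (1 + ‖x‖ ^ 4) := by nlinarith [sq_nonneg (1 + ‖x‖), sq_nonneg (1 + ‖x‖^2)]
    have e4 : ‖f x‖ * (1 + ‖x‖) ^ 4 ≤ ‖f x‖ * (8 * (1 + ‖x‖ ^ 4)) := by gcongr
    nlinarith [mul_le_mul_of_nonneg_left e3 hfx]
  calc ‖f x‖ = ‖f x‖ * (1 + ‖x‖) ^ 4 * ((1 + ‖x‖) ^ 4)⁻¹ := by field_simp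
    _ ≤ 8 * (C0 + C4) * ((1 + ‖x‖) ^ 4)⁻¹ := by gcongr
    _ = _ := rfl

end NLS18
namespace NLS18

open MeasureTheory

lemma pd_contDiff {f : V3 → ℂ} (hf : ContDiff ℝ (⊤ : ℕ∞) f) (j : Fin 3) :
    ContDiff ℝ (⊤ : ℕ∞) (pd j f) :=
  (hf.fderiv_right psucc_le_top).clm_apply contDiff_const

lemma pd_sub {f g : V3 → ℂ} (hf : Differentiable ℝ f) (hg : Differentiable ℝ g)
    (i : Fin 3) (x : V3) :
    pd i (fun y => f y - g y) x = pd i f x - pd i g x := by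
  unfold pd
  rw [fderiv_fun_sub (hf x) (hg x)]
  rfl

lemma pd_fun_sub {f g : V3 → ℂ} (hf : Differentiable ℝ f) (hg : Differentiable ℝ g)
    (i : Fin 3) :
    pd i (fun y => f y - g y) = fun x => pd i f x - pd i g x :=
  funext (pd_sub hf hg i)

section Sol

variable {G : V3 → Matrix (Fin 3) (Fin 3) ℝ} {a : V3 → ℝ} {s : Set ℝ} {u : ℝ → V3 → ℂ}

lemma sol_slice_smooth (hu : IsSolution G a s u) (t : ℝ) :
    ContDiff ℝ (⊤ : ℕ∞) (u t) :=
  contDiff_slice hu.smooth t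

lemma sol_decay_pt (hu : IsSolution G a s u) (n k : ℕ) (t : ℝ) :
    ∃ C : ℝ, ∀ x : V3,
      ‖x‖ ^ k * ‖iteratedFDeriv ℝ n (fun p : ℝ × V3 => u p.1 p.2) (t, x)‖ ≤ C := by
  obtain ⟨C, hC⟩ := hu.decay n k {t} isCompact_singleton
  exact ⟨C, fun x => hC t rfl x⟩

lemma sol_sd0 (hu : IsSolution G a s u) (t : ℝ) : SD (u t) where
  cont := (sol_slice_smooth hu t).continuous
  bdd k := by
    obtain ⟨C, hC⟩ := sol_decay_pt hu 0 k t
    refine ⟨C, fun x => ?_⟩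
    have := hC x
    rwa [norm_iteratedFDeriv_zero] at this

lemma sol_sd1 (hu : IsSolution G a s u) (t : ℝ) (j : Fin 3) : SD (pd j (u t)) where
  cont := (pd_contDiff (sol_slice_smooth hu t) j).continuous
  bdd k := by
    obtain ⟨C, hC⟩ := sol_decay_pt hu 1 k t
    refine ⟨C, fun x => ?_⟩
    have h1 : pd j (u t) x = fderiv ℝ (fun p : ℝ × V3 => u p.1 p.2) (t, x) (0, e3 j) :=
      pd_slice hu.smooth t x j
    have h2 : ‖pd j (u t) x‖ ≤ ‖iteratedFDeriv ℝ 1 (fun p : ℝ × V3 => u p.1 p.2) (t, x)‖ := by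
      rw [h1]
      have := norm_fderiv_apply_le (fun p : ℝ × V3 => u p.1 p.2) (t, x) (0, e3 j)
      rwa [norm_pair_e3, mul_one] at this
    exact le_trans (by gcongr) (hC x)

lemma sol_sd2 (hu : IsSolution G a s u) (t : ℝ) (i j : Fin 3) :
    SD (pd i (pd j (u t))) where
  cont := (pd_contDiff (pd_contDiff (sol_slice_smooth hu t) j) i).continuous
  bdd k := by
    obtain ⟨C, hC⟩ := sol_decay_pt hu 2 k t
    refine ⟨C, fun x => ?_⟩
    have h1 : pd i (pd j (u t)) x
        = fderiv ℝ (fderiv ℝ (fun p : ℝ × V3 => u p.1 p.2)) (t, x) (0, e3 i) (0, e3 j) :=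
      pdpd_slice hu.smooth t x i j
    have h2 : ‖pd i (pd j (u t)) x‖
        ≤ ‖iteratedFDeriv ℝ 2 (fun p : ℝ × V3 => u p.1 p.2) (t, x)‖ := by
      rw [h1]
      have := norm_fderiv2_apply_le (fun p : ℝ × V3 => u p.1 p.2) (t, x) (0, e3 i) (0, e3 j)
      rwa [norm_pair_e3, norm_pair_e3, mul_one, mul_one] at this
    exact le_trans (by gcongr) (hC x)

lemma sol_timeDeriv_eq (hu : IsSolution G a s u) (t : ℝ) (x : V3) :
    timeDeriv u t x = fderiv ℝ (fun p : ℝ × V3 => u p.1 p.2) (t, x) (1, (0 : V3)) :=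
  timeDeriv_slice hu.smooth t x

lemma sol_cont_timeDeriv (hu : IsSolution G a s u) (t : ℝ) :
    Continuous (fun x => timeDeriv u t x) := by
  have h1 : Continuous (fderiv ℝ (fun p : ℝ × V3 => u p.1 p.2)) :=
    (hu.smooth.fderiv_right psucc_le_top).continuous
  have h2 : Continuous (fun x : V3 =>
      fderiv ℝ (fun p : ℝ × V3 => u p.1 p.2) (t, x) ((1 : ℝ), (0 : V3))) :=
    (h1.comp (continuous_const.prodMk continuous_id)).clm_apply continuous_const
  exact h2.congr fun x => (sol_timeDeriv_eq hu t x).symm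

lemma sol_hasDerivAt_time (hu : IsSolution G a s u) (t : ℝ) (x : V3) :
    HasDerivAt (fun s' : ℝ => u s' x) (timeDeriv u t x) t := by
  have hd : DifferentiableAt ℝ (fun s' : ℝ => u s' x) t := by
    have : DifferentiableAt ℝ (fun p : ℝ × V3 => u p.1 p.2) (t, x) :=
      (hu.smooth.differentiable ple_top) (t, x)
    exact this.comp t ((differentiableAt_id.prodMk (differentiableAt_const x)) :
      DifferentiableAt ℝ (fun s' : ℝ => ((s', x) : ℝ × V3)) t)
  exact hd.hasDerivAt

end Sol

lemma fderiv_conj_apply {f : V3 → ℂ} {x : V3} (hf : DifferentiableAt ℝ f x) (w : V3) :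
    fderiv ℝ (fun y => (starRingEnd ℂ) (f y)) x w = (starRingEnd ℂ) (fderiv ℝ f x w) := by
  have h := (Complex.conjCLE.toContinuousLinearMap.hasFDerivAt (x := f x)).comp x hf.hasFDerivAt
  have h2 : HasFDerivAt (fun y => (starRingEnd ℂ) (f y))
      (Complex.conjCLE.toContinuousLinearMap.comp (fderiv ℝ f x)) x := h
  rw [h2.fderiv]
  rfl

lemma contDiff_conj {f : V3 → ℂ} (hf : ContDiff ℝ (⊤ : ℕ∞) f) :
    ContDiff ℝ (⊤ : ℕ∞) (fun y => (starRingEnd ℂ) (f y)) :=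
  Complex.conjCLE.toContinuousLinearMap.contDiff.comp hf

lemma hasDerivAt_norm_sq {h : ℝ → ℂ} {h' : ℂ} {s : ℝ} (H : HasDerivAt h h' s) :
    HasDerivAt (fun s' => ‖h s'‖ ^ 2) (2 * (h' * (starRingEnd ℂ) (h s)).re) s := by
  have Hre : HasDerivAt (fun s' => (h s').re) h'.re s :=
    (Complex.reCLM.hasFDerivAt.comp_hasDerivAt s H)
  have Him : HasDerivAt (fun s' => (h s').im) h'.im s :=
    (Complex.imCLM.hasFDerivAt.comp_hasDerivAt s H)
  have H2 : HasDerivAt (fun s' => (h s').re ^ 2 + (h s').im ^ 2)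
      (2 * (h s).re ^ 1 * h'.re + 2 * (h s).im ^ 1 * h'.im) s :=
    ((Hre.pow 2).add (Him.pow 2))
  have He : (fun s' => ‖h s'‖ ^ 2) = fun s' => (h s').re ^ 2 + (h s').im ^ 2 := by
    funext s'
    rw [Complex.sq_norm, Complex.normSq_apply]
    ring
  rw [He]
  convert H2 using 1
  simp [Complex.mul_re, Complex.conj_re, Complex.conj_im]
  ring

end NLS18
namespace NLS18

open MeasureTheory

lemma bound_of_zero_off_compact {E : Type*} [NormedAddCommGroup E] {f : V3 → E} {K : Set V3}
    (hf : Continuous f) (hK : IsCompact K) (h0 : ∀ x ∉ K, f x = 0) :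
    ∃ D : ℝ, ∀ x, ‖f x‖ ≤ D := by
  have hcs : HasCompactSupport f := HasCompactSupport.intro hK h0
  exact hcs.exists_bound_of_continuous hf

lemma pd_mul {c d : V3 → ℂ} {x : V3} (hc : DifferentiableAt ℝ c x)
    (hd : DifferentiableAt ℝ d x) (i : Fin 3) :
    pd i (fun y => c y * d y) x = c x * pd i d x + d x * pd i c x := by
  unfold pd
  rw [fderiv_fun_mul hc hd]
  simp

section Coef

variable {G : V3 → Matrix (Fin 3) (Fin 3) ℝ} {a : V3 → ℝ} (hGa : Coeffs G a)
include hGa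

/-- The complexified matrix entry. -/
abbrev Gc (G : V3 → Matrix (Fin 3) (Fin 3) ℝ) (i j : Fin 3) : V3 → ℂ :=
  fun x => ((G x i j : ℝ) : ℂ)

lemma Gc_smooth (i j : Fin 3) : ContDiff ℝ (⊤ : ℕ∞) (Gc G i j) :=
  Complex.ofRealCLM.contDiff.comp (hGa.G_smooth i j)

lemma Gc_cont (i j : Fin 3) : Continuous (Gc G i j) :=
  (Gc_smooth hGa i j).continuous

lemma Gc_bdd (i j : Fin 3) : ∃ D : ℝ, ∀ x, ‖Gc G i j x‖ ≤ D := by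
  obtain ⟨D, hD⟩ := bound_of_zero_off_compact (f := fun x => G x i j - (1 : Matrix (Fin 3) (Fin 3) ℝ) i j)
    (by exact ((hGa.G_smooth i j).continuous).sub continuous_const) hGa.G_cpt
    (fun x hx => by
      have hx' : x ∉ {x : V3 | G x ≠ 1} := fun h => hx (subset_closure h)
      have : G x = 1 := by simpa using hx'
      simp [this])
  refine ⟨D + 1, fun x => ?_⟩
  have h1 : ‖Gc G i j x‖ = |G x i j| := by
    simp [Gc, Complex.norm_real]
  have h2 : |G x i j - (1 : Matrix (Fin 3) (Fin 3) ℝ) i j| ≤ D := hD x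
  have h3 : |(1 : Matrix (Fin 3) (Fin 3) ℝ) i j| ≤ 1 := by
    simp [Matrix.one_apply]
    split <;> norm_num
  rw [h1]
  calc |G x i j| ≤ |G x i j - (1 : Matrix (Fin 3) (Fin 3) ℝ) i j|
        + |(1 : Matrix (Fin 3) (Fin 3) ℝ) i j| := by
        have := abs_sub_abs_le_abs_sub (G x i j) ((1 : Matrix (Fin 3) (Fin 3) ℝ) i j)
        linarith [abs_nonneg ((1 : Matrix (Fin 3) (Fin 3) ℝ) i j)]
    _ ≤ D + 1 := add_le_add h2 h3

lemma pd_Gc_bdd (i j k : Fin 3) : ∃ D : ℝ, ∀ x, ‖pd k (Gc G i j) x‖ ≤ D := by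
  apply bound_of_zero_off_compact (K := closure {x : V3 | G x ≠ 1})
    (pd_contDiff (Gc_smooth hGa i j) k).continuous hGa.G_cpt
  intro x hx
  have hopen : IsOpen (closure {x : V3 | G x ≠ 1})ᶜ := isClosed_closure.isOpen_compl
  have hev : ∀ᶠ y in nhds x, Gc G i j y = ((1 : Matrix (Fin 3) (Fin 3) ℝ) i j : ℂ) := by
    filter_upwards [hopen.mem_nhds hx] with y hy
    have hy' : y ∉ {x : V3 | G x ≠ 1} := fun h => hy (subset_closure h)
    have : G y = 1 := by simpa using hy'
    simp [Gc, this]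
  have : fderiv ℝ (Gc G i j) x = fderiv ℝ (fun _ : V3 => ((1 : Matrix (Fin 3) (Fin 3) ℝ) i j : ℂ)) x :=
    Filter.EventuallyEq.fderiv_eq hev
  unfold pd
  rw [this, fderiv_fun_const]
  simp

lemma a_bdd : ∃ D : ℝ, ∀ x, ‖a x‖ ≤ D :=
  hGa.a_cpt.exists_bound_of_continuous hGa.a_smooth.continuous

end Coef

lemma divG_sub {G : V3 → Matrix (Fin 3) (Fin 3) ℝ} {a : V3 → ℝ} (hGa : Coeffs G a)
    {f g : V3 → ℂ} (hf : ContDiff ℝ (⊤ : ℕ∞) f) (hg : ContDiff ℝ (⊤ : ℕ∞) g) (x : V3) :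
    divG G f x - divG G g x = divG G (fun y => f y - g y) x := by
  unfold divG
  rw [← Finset.sum_sub_distrib]
  refine Finset.sum_congr rfl fun i _ => ?_
  rw [← Finset.sum_sub_distrib]
  refine Finset.sum_congr rfl fun j _ => ?_
  have hGc : ContDiff ℝ (⊤ : ℕ∞) (Gc G i j) := Gc_smooth hGa i j
  have hpf : ContDiff ℝ (⊤ : ℕ∞) (pd j f) := pd_contDiff hf j
  have hpg : ContDiff ℝ (⊤ : ℕ∞) (pd j g) := pd_contDiff hg j
  have e : (fun y => (Gc G i j) y * pd j (fun z => f z - g z) y)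
      = fun y => (Gc G i j) y * pd j f y - (Gc G i j) y * pd j g y := by
    funext y
    rw [pd_sub (hf.differentiable ple_top) (hg.differentiable ple_top)]
    ring
  have h1 : Differentiable ℝ (fun y => (Gc G i j) y * pd j f y) :=
    (hGc.mul hpf).differentiable ple_top
  have h2 : Differentiable ℝ (fun y => (Gc G i j) y * pd j g y) :=
    (hGc.mul hpg).differentiable ple_top
  calc pd i (fun y => (Gc G i j) y * pd j f y) x - pd i (fun y => (Gc G i j) y * pd j g y) x
      = pd i (fun y => (Gc G i j) y * pd j f y - (Gc G i j) y * pd j g y) x :=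
        (pd_sub h1 h2 i x).symm
    _ = pd i (fun y => (Gc G i j) y * pd j (fun z => f z - g z) y) x := by rw [e]

end NLS18
/-- The Yudovich-type `L²` stability estimate for two solutions. -/
theorem statement18 (G : V3 → Matrix (Fin 3) (Fin 3) ℝ) (a : V3 → ℝ) (hGa : Coeffs G a)
    (T : ℝ) (hT : 0 ≤ T) (u v : ℝ → V3 → ℂ)
    (hu : IsSolution G a (Set.Icc 0 T) u) (hv : IsSolution G a (Set.Icc 0 T) v) :
    ∀ t ∈ Set.Icc (0 : ℝ) T,
      deriv (fun s => ∫ x : V3, ‖u s x - v s x‖ ^ 2) t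
        ≤ 3 * ∫ x : V3, (‖u t x‖ ^ 2 + ‖v t x‖ ^ 2) * ‖u t x - v t x‖ ^ 2 := by

  intro t ht
  classical
  open NLS18 in
  have ple := NLS18.ple_top
  have hsmU : ContDiff ℝ (⊤ : ℕ∞) (u t) := NLS18.sol_slice_smooth hu t
  have hsmV : ContDiff ℝ (⊤ : ℕ∞) (v t) := NLS18.sol_slice_smooth hv t
  have hdU : Differentiable ℝ (u t) := hsmU.differentiable NLS18.ple_top
  have hdV : Differentiable ℝ (v t) := hsmV.differentiable NLS18.ple_top
  set W : V3 → ℂ := fun x => u t x - v t x with hWdef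
  have hsmW : ContDiff ℝ (⊤ : ℕ∞) W := hsmU.sub hsmV
  have hdW : Differentiable ℝ W := hsmW.differentiable NLS18.ple_top
  have sdW : NLS18.SD W := (NLS18.sol_sd0 hu t).sub (NLS18.sol_sd0 hv t)
  have hpdWfun : ∀ i, pd i W = fun x => pd i (u t) x - pd i (v t) x := fun i =>
    NLS18.pd_fun_sub hdU hdV i
  have sdpdW : ∀ i, NLS18.SD (pd i W) := fun i => by
    rw [hpdWfun i]; exact (NLS18.sol_sd1 hu t i).sub (NLS18.sol_sd1 hv t i)
  have hsmpdW : ∀ i, ContDiff ℝ (⊤ : ℕ∞) (pd i W) := fun i => NLS18.pd_contDiff hsmW i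
  have sdpdpdW : ∀ i j, NLS18.SD (pd i (pd j W)) := fun i j => by
    have h1 : pd i (pd j W) = fun x => pd i (pd j (u t)) x - pd i (pd j (v t)) x := by
      rw [hpdWfun j]
      exact NLS18.pd_fun_sub ((NLS18.pd_contDiff hsmU j).differentiable NLS18.ple_top)
        ((NLS18.pd_contDiff hsmV j).differentiable NLS18.ple_top) i
    rw [h1]
    exact (NLS18.sol_sd2 hu t i j).sub (NLS18.sol_sd2 hv t i j)
  -- the coefficient functions
  have sdFc : ∀ i j, NLS18.SD (fun y => NLS18.Gc G i j y * pd j W y) := fun i j =>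
    NLS18.SD.bdd_mul (NLS18.Gc_cont hGa i j) (NLS18.Gc_bdd hGa i j) (sdpdW j)
  have hsmFc : ∀ i j, ContDiff ℝ (⊤ : ℕ∞) (fun y => NLS18.Gc G i j y * pd j W y) := fun i j =>
    (NLS18.Gc_smooth hGa i j).mul (hsmpdW j)
  have sdpdFc : ∀ i j k, NLS18.SD (pd k (fun y => NLS18.Gc G i j y * pd j W y)) := by
    intro i j k
    have hrw : pd k (fun y => NLS18.Gc G i j y * pd j W y)
        = fun x => NLS18.Gc G i j x * pd k (pd j W) x + pd k (NLS18.Gc G i j) x * pd j W x :=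
      funext fun x => by
        rw [NLS18.pd_mul ((NLS18.Gc_smooth hGa i j).differentiable NLS18.ple_top x)
          ((hsmpdW j).differentiable NLS18.ple_top x) k]
        ring
    rw [hrw]
    exact (NLS18.SD.bdd_mul (NLS18.Gc_cont hGa i j) (NLS18.Gc_bdd hGa i j) (sdpdpdW k j)).add
      (NLS18.SD.bdd_mul (NLS18.pd_contDiff (NLS18.Gc_smooth hGa i j) k).continuous
        (NLS18.pd_Gc_bdd hGa i j k) (sdpdW j))
  -- Step 1 : differentiation under the integral sign
  have hball : Metric.ball t 1 ⊆ Set.Icc (t-1) (t+1) := by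
    intro s hs
    rw [Metric.mem_ball, Real.dist_eq, abs_sub_lt_iff] at hs
    constructor
    · linarith [hs.2]
    · linarith [hs.1]
  obtain ⟨Cu0, hCu0⟩ := hu.decay 0 0 (Set.Icc (t-1) (t+1)) isCompact_Icc
  obtain ⟨Cv0, hCv0⟩ := hv.decay 0 0 (Set.Icc (t-1) (t+1)) isCompact_Icc
  obtain ⟨Du0, hDu0⟩ := hu.decay 1 0 (Set.Icc (t-1) (t+1)) isCompact_Icc
  obtain ⟨Dv0, hDv0⟩ := hv.decay 1 0 (Set.Icc (t-1) (t+1)) isCompact_Icc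
  obtain ⟨Du4, hDu4⟩ := hu.decay 1 4 (Set.Icc (t-1) (t+1)) isCompact_Icc
  obtain ⟨Dv4, hDv4⟩ := hv.decay 1 4 (Set.Icc (t-1) (t+1)) isCompact_Icc
  have hbound_main : ∀ s ∈ Set.Icc (t-1) (t+1), ∀ x : V3,
      |2 * ((timeDeriv u s x - timeDeriv v s x) * (starRingEnd ℂ) (u s x - v s x)).re|
        ≤ 16 * ((Du0+Dv0)*(Cu0+Cv0) + (Du4+Dv4)*(Cu0+Cv0)) * ((1+‖x‖)^4)⁻¹ := by
    intro s hs x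
    have h0u : ‖u s x‖ ≤ Cu0 := by
      have := hCu0 s hs x; simpa [norm_iteratedFDeriv_zero] using this
    have h0v : ‖v s x‖ ≤ Cv0 := by
      have := hCv0 s hs x; simpa [norm_iteratedFDeriv_zero] using this
    have hτu : ∀ k : ℕ, ∀ Cc : ℝ,
        (∀ t' ∈ Set.Icc (t-1) (t+1), ∀ y : V3, ‖y‖ ^ k * ‖iteratedFDeriv ℝ 1 (fun p : ℝ × V3 => u p.1 p.2) (t', y)‖ ≤ Cc) →
        ‖x‖ ^ k * ‖timeDeriv u s x‖ ≤ Cc := by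
      intro k Cc hCc
      have h1 : ‖timeDeriv u s x‖ ≤ ‖iteratedFDeriv ℝ 1 (fun p : ℝ × V3 => u p.1 p.2) (s, x)‖ := by
        rw [NLS18.sol_timeDeriv_eq hu s x]
        have := NLS18.norm_fderiv_apply_le (fun p : ℝ × V3 => u p.1 p.2) (s, x) (1, (0:V3))
        rwa [NLS18.norm_one_zero, mul_one] at this
      exact le_trans (by gcongr) (hCc s hs x)
    have hτv : ∀ k : ℕ, ∀ Cc : ℝ,
        (∀ t' ∈ Set.Icc (t-1) (t+1), ∀ y : V3, ‖y‖ ^ k * ‖iteratedFDeriv ℝ 1 (fun p : ℝ × V3 => v p.1 p.2) (t', y)‖ ≤ Cc) →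
        ‖x‖ ^ k * ‖timeDeriv v s x‖ ≤ Cc := by
      intro k Cc hCc
      have h1 : ‖timeDeriv v s x‖ ≤ ‖iteratedFDeriv ℝ 1 (fun p : ℝ × V3 => v p.1 p.2) (s, x)‖ := by
        rw [NLS18.sol_timeDeriv_eq hv s x]
        have := NLS18.norm_fderiv_apply_le (fun p : ℝ × V3 => v p.1 p.2) (s, x) (1, (0:V3))
        rwa [NLS18.norm_one_zero, mul_one] at this
      exact le_trans (by gcongr) (hCc s hs x)
    have hτ0 : ‖timeDeriv u s x - timeDeriv v s x‖ ≤ Du0 + Dv0 := by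
      have h1 := hτu 0 Du0 hDu0
      have h2 := hτv 0 Dv0 hDv0
      simp only [pow_zero, one_mul] at h1 h2
      exact le_trans (norm_sub_le _ _) (add_le_add h1 h2)
    have hτ4 : ‖x‖ ^ 4 * ‖timeDeriv u s x - timeDeriv v s x‖ ≤ Du4 + Dv4 := by
      have h1 := hτu 4 Du4 hDu4
      have h2 := hτv 4 Dv4 hDv4
      calc ‖x‖ ^ 4 * ‖timeDeriv u s x - timeDeriv v s x‖
          ≤ ‖x‖ ^ 4 * (‖timeDeriv u s x‖ + ‖timeDeriv v s x‖) := by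
            gcongr; exact norm_sub_le _ _
        _ = ‖x‖ ^ 4 * ‖timeDeriv u s x‖ + ‖x‖ ^ 4 * ‖timeDeriv v s x‖ := by ring
        _ ≤ Du4 + Dv4 := add_le_add h1 h2
    have hw0 : ‖u s x - v s x‖ ≤ Cu0 + Cv0 :=
      le_trans (norm_sub_le _ _) (add_le_add h0u h0v)
    have habs : |2 * ((timeDeriv u s x - timeDeriv v s x) * (starRingEnd ℂ) (u s x - v s x)).re|
        ≤ 2 * (‖timeDeriv u s x - timeDeriv v s x‖ * ‖u s x - v s x‖) := by
      rw [abs_mul, abs_two]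
      have h2 : ‖(timeDeriv u s x - timeDeriv v s x) * (starRingEnd ℂ) (u s x - v s x)‖
          = ‖timeDeriv u s x - timeDeriv v s x‖ * ‖u s x - v s x‖ := by
        rw [norm_mul, RCLike.norm_conj]
      rw [← h2]
      gcongr
      exact Complex.abs_re_le_norm _
    have hpos : (0:ℝ) < (1 + ‖x‖) ^ 4 := by positivity
    have e3 := NLS18.pow4_bound (norm_nonneg x)
    have h1 : ‖timeDeriv u s x - timeDeriv v s x‖ * ‖u s x - v s x‖
        ≤ (Du0+Dv0) * (Cu0+Cv0) :=
      mul_le_mul hτ0 hw0 (norm_nonneg _) ((norm_nonneg _).trans hτ0)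
    have h2 : (‖x‖^4 * ‖timeDeriv u s x - timeDeriv v s x‖) * ‖u s x - v s x‖
        ≤ (Du4+Dv4) * (Cu0+Cv0) :=
      mul_le_mul hτ4 hw0 (norm_nonneg _)
        ((mul_nonneg (by positivity) (norm_nonneg _)).trans hτ4)
    have h3 := mul_le_mul habs e3 hpos.le
      (by positivity)
    have key : |2 * ((timeDeriv u s x - timeDeriv v s x) * (starRingEnd ℂ) (u s x - v s x)).re|
        * (1+‖x‖)^4 ≤ 16 * ((Du0+Dv0)*(Cu0+Cv0) + (Du4+Dv4)*(Cu0+Cv0)) := by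
      nlinarith [h3, h1, h2]
    calc |2 * ((timeDeriv u s x - timeDeriv v s x) * (starRingEnd ℂ) (u s x - v s x)).re|
        = |2 * ((timeDeriv u s x - timeDeriv v s x) * (starRingEnd ℂ) (u s x - v s x)).re|
          * (1+‖x‖)^4 * ((1+‖x‖)^4)⁻¹ := by field_simp
      _ ≤ 16 * ((Du0+Dv0)*(Cu0+Cv0) + (Du4+Dv4)*(Cu0+Cv0)) * ((1+‖x‖)^4)⁻¹ := by gcongr
  -- the actual application of dominated differentiation
  have key1 := hasDerivAt_integral_of_dominated_loc_of_deriv_le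
      (F := fun s (x : V3) => ‖u s x - v s x‖ ^ 2)
      (F' := fun s (x : V3) =>
        2 * ((timeDeriv u s x - timeDeriv v s x) * (starRingEnd ℂ) (u s x - v s x)).re)
      (μ := (volume : Measure V3)) (x₀ := t)
      (bound := fun x : V3 =>
        16 * ((Du0+Dv0)*(Cu0+Cv0) + (Du4+Dv4)*(Cu0+Cv0)) * ((1+‖x‖)^4)⁻¹)
      (s := Metric.ball t 1) (Metric.ball_mem_nhds t one_pos)
      (Filter.Eventually.of_forall fun s =>
        (((NLS18.contDiff_slice hu.smooth s).continuous.sub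
          (NLS18.contDiff_slice hv.smooth s).continuous).norm.pow 2).aestronglyMeasurable)
      (((sdW.norm.mul sdW.norm).congr fun x => (sq ‖W x‖).symm).integrable)
      (by
        apply Continuous.aestronglyMeasurable
        have hτ : Continuous (fun x : V3 => timeDeriv u t x - timeDeriv v t x) :=
          (NLS18.sol_cont_timeDeriv hu t).sub (NLS18.sol_cont_timeDeriv hv t)
        have hWc : Continuous (fun x : V3 => (starRingEnd ℂ) (u t x - v t x)) :=
          Complex.continuous_conj.comp ((hsmU.continuous).sub (hsmV.continuous))
        exact continuous_const.mul ((Complex.continuous_re).comp (hτ.mul hWc)))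
      (Filter.Eventually.of_forall fun x s hs => by
        rw [Real.norm_eq_abs]
        exact hbound_main s (hball hs) x)
      (NLS18.integrable_japanese.const_mul _)
      (Filter.Eventually.of_forall fun x s hs =>
        NLS18.hasDerivAt_norm_sq
          ((NLS18.sol_hasDerivAt_time hu s x).sub (NLS18.sol_hasDerivAt_time hv s x)))
  rw [key1.2.deriv]
  -- Step 2 : pointwise use of the equations
  set N : V3 → ℂ := fun x => (‖u t x‖ : ℂ)^2 * u t x - (‖v t x‖ : ℂ)^2 * v t x with hNdef
  have keyu : ∀ x, timeDeriv u t x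
      = -Complex.I * ((‖u t x‖:ℂ)^2 * u t x - divG G (u t) x - Complex.I * (a x : ℂ) * u t x) := by
    intro x
    have h2 : Complex.I * timeDeriv u t x
        = (‖u t x‖:ℂ)^2 * u t x - divG G (u t) x - Complex.I * (a x:ℂ) * u t x := by
      linear_combination hu.eqn t ht x
    calc timeDeriv u t x = -Complex.I * (Complex.I * timeDeriv u t x) := by
          rw [← mul_assoc, neg_mul, Complex.I_mul_I, neg_neg, one_mul]
      _ = _ := by rw [h2]
  have keyv : ∀ x, timeDeriv v t x
      = -Complex.I * ((‖v t x‖:ℂ)^2 * v t x - divG G (v t) x - Complex.I * (a x : ℂ) * v t x) := by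
    intro x
    have h2 : Complex.I * timeDeriv v t x
        = (‖v t x‖:ℂ)^2 * v t x - divG G (v t) x - Complex.I * (a x:ℂ) * v t x := by
      linear_combination hv.eqn t ht x
    calc timeDeriv v t x = -Complex.I * (Complex.I * timeDeriv v t x) := by
          rw [← mul_assoc, neg_mul, Complex.I_mul_I, neg_neg, one_mul]
      _ = _ := by rw [h2]
  have hdivsub : ∀ x, divG G (u t) x - divG G (v t) x = divG G W x := fun x =>
    NLS18.divG_sub hGa hsmU hsmV x
  have hdecomp : ∀ x : V3,
      2 * ((timeDeriv u t x - timeDeriv v t x) * (starRingEnd ℂ) (u t x - v t x)).re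
        = 2 * ((-Complex.I) * N x * (starRingEnd ℂ) (W x)).re
          + 2 * (Complex.I * divG G W x * (starRingEnd ℂ) (W x)).re
          + (-2) * a x * ‖W x‖^2 := by
    intro x
    have hτw : timeDeriv u t x - timeDeriv v t x
        = -Complex.I * N x + Complex.I * divG G W x + (-(a x:ℂ)) * W x := by
      rw [keyu x, keyv x, ← hdivsub x, hNdef, hWdef]
      linear_combination ((a x : ℂ) * (u t x - v t x)) * Complex.I_sq
    have hre : (timeDeriv u t x - timeDeriv v t x) * (starRingEnd ℂ) (u t x - v t x)
        = (-Complex.I) * N x * (starRingEnd ℂ) (W x)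
          + Complex.I * divG G W x * (starRingEnd ℂ) (W x)
          + (-(a x:ℂ)) * (W x * (starRingEnd ℂ) (W x)) := by
      rw [hτw, hWdef]
      ring
    rw [hre, Complex.add_re, Complex.add_re]
    have h4 : W x * (starRingEnd ℂ) (W x) = ((‖W x‖^2 : ℝ) : ℂ) := by
      rw [Complex.mul_conj]
      norm_cast
      rw [Complex.sq_norm]
    have h5 : ((-(a x:ℂ)) * ((‖W x‖^2:ℝ):ℂ)).re = -(a x * ‖W x‖^2) := by
      rw [← Complex.ofReal_neg, ← Complex.ofReal_mul, Complex.ofReal_re]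
      ring
    rw [h4, h5]
    ring
  -- Step 3 : integrability of all the pieces
  have sdUn : NLS18.SD (fun x => (‖u t x‖:ℂ)^2 * u t x) := by
    have h1 : NLS18.SD (fun x => ‖u t x‖ * ‖u t x‖) :=
      ((NLS18.sol_sd0 hu t).norm.mul (NLS18.sol_sd0 hu t).norm)
    have h2 : NLS18.SD (fun x => ((‖u t x‖ * ‖u t x‖ : ℝ) : ℂ)) := h1.ofReal
    exact (h2.mul (NLS18.sol_sd0 hu t)).congr fun x => by
      push_cast
      ring
  have sdVn : NLS18.SD (fun x => (‖v t x‖:ℂ)^2 * v t x) := by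
    have h1 : NLS18.SD (fun x => ‖v t x‖ * ‖v t x‖) :=
      ((NLS18.sol_sd0 hv t).norm.mul (NLS18.sol_sd0 hv t).norm)
    exact (h1.ofReal.mul (NLS18.sol_sd0 hv t)).congr fun x => by
      push_cast
      ring
  have sdN : NLS18.SD N := sdUn.sub sdVn
  have sdP : NLS18.SD (fun x => 2 * ((-Complex.I) * N x * (starRingEnd ℂ) (W x)).re) := by
    have h1 : NLS18.SD (fun x => (-Complex.I) * (N x * (starRingEnd ℂ) (W x))) :=
      (sdN.mul sdW.conj).const_mul (-Complex.I)
    exact ((h1.congr fun x => by ring).re).const_mulR 2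
  have sdq : ∀ i j : Fin 3, NLS18.SD (fun x =>
      2 * (Complex.I * pd i (fun y => NLS18.Gc G i j y * pd j W y) x * (starRingEnd ℂ) (W x)).re) := by
    intro i j
    have h1 : NLS18.SD (fun x =>
        Complex.I * (pd i (fun y => NLS18.Gc G i j y * pd j W y) x * (starRingEnd ℂ) (W x))) :=
      ((sdpdFc i j i).mul sdW.conj).const_mul Complex.I
    exact ((h1.congr fun x => by ring).re).const_mulR 2
  have sdR : NLS18.SD (fun x => (-2) * a x * ‖W x‖^2) := by
    obtain ⟨Da, hDa⟩ := NLS18.a_bdd hGa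
    have h1 : NLS18.SD (fun x => ‖W x‖ * ‖W x‖) := sdW.norm.mul sdW.norm
    have h2 : NLS18.SD (fun x => ((-2) * a x) * (‖W x‖ * ‖W x‖)) :=
      NLS18.SD.bdd_mul (continuous_const.mul hGa.a_smooth.continuous)
        ⟨2 * Da, fun x => by
          rw [norm_mul]
          have : ‖(-2:ℝ)‖ = 2 := by norm_num
          rw [this]
          exact mul_le_mul_of_nonneg_left (hDa x) (by norm_num)⟩ h1
    exact h2.congr fun x => by ring
  have sdRHS : NLS18.SD (fun x => (‖u t x‖^2 + ‖v t x‖^2) * ‖u t x - v t x‖^2) := by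
    have h1 : NLS18.SD (fun x => ‖u t x‖ * ‖u t x‖ + ‖v t x‖ * ‖v t x‖) :=
      ((NLS18.sol_sd0 hu t).norm.mul (NLS18.sol_sd0 hu t).norm).add
        ((NLS18.sol_sd0 hv t).norm.mul (NLS18.sol_sd0 hv t).norm)
    have h2 : NLS18.SD (fun x => ‖W x‖ * ‖W x‖) := sdW.norm.mul sdW.norm
    exact (h1.mul h2).congr fun x => by rw [hWdef]; ring
  have hPint := sdP.integrable
  have hRint := sdR.integrable
  have hQrw : ∀ x : V3, (2:ℝ) * (Complex.I * divG G W x * (starRingEnd ℂ) (W x)).re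
      = ∑ i, ∑ j, 2 * (Complex.I * pd i (fun y => NLS18.Gc G i j y * pd j W y) x
          * (starRingEnd ℂ) (W x)).re := by
    intro x
    unfold divG
    rw [Finset.mul_sum, Finset.sum_mul, Complex.re_sum, Finset.mul_sum]
    refine Finset.sum_congr rfl fun i _ => ?_
    rw [Finset.mul_sum, Finset.sum_mul, Complex.re_sum, Finset.mul_sum]
  have hQint : Integrable (fun x => 2 * (Complex.I * divG G W x * (starRingEnd ℂ) (W x)).re)
      (volume : Measure V3) := by
    have h1 : Integrable (fun x => ∑ i, ∑ j : Fin 3,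
        2 * (Complex.I * pd i (fun y => NLS18.Gc G i j y * pd j W y) x
          * (starRingEnd ℂ) (W x)).re) (volume : Measure V3) :=
      integrable_finset_sum _ fun i _ => integrable_finset_sum _ fun j _ => (sdq i j).integrable
    exact h1.congr (Filter.Eventually.of_forall fun x => (hQrw x).symm)
  have hQzero : (∫ x : V3, 2 * (Complex.I * divG G W x * (starRingEnd ℂ) (W x)).re) = 0 := by
    have hconjW_d : Differentiable ℝ (fun x : V3 => (starRingEnd ℂ) (W x)) :=
      (NLS18.contDiff_conj hsmW).differentiable NLS18.ple_top
    have hfdc : ∀ (i : Fin 3) (x : V3),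
        fderiv ℝ (fun y => (starRingEnd ℂ) (W y)) x (EuclideanSpace.single i 1)
          = (starRingEnd ℂ) (pd i W x) := fun i x => NLS18.fderiv_conj_apply (hdW x) _
    have hIBP : ∀ i j : Fin 3,
        (∫ x : V3, (starRingEnd ℂ) (W x) * pd i (fun y => NLS18.Gc G i j y * pd j W y) x)
          = - ∫ x : V3, (starRingEnd ℂ) (pd i W x) * (NLS18.Gc G i j x * pd j W x) := by
      intro i j
      have hint1 : Integrable (fun x : V3 =>
          fderiv ℝ (fun y : V3 => (starRingEnd ℂ) (W y)) x (EuclideanSpace.single i 1)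
            * (NLS18.Gc G i j x * pd j W x)) (volume : Measure V3) :=
        (((sdpdW i).conj.mul (sdFc i j)).integrable).congr
          (Filter.Eventually.of_forall fun x => by beta_reduce; rw [hfdc i x])
      have hmain := integral_mul_fderiv_eq_neg_fderiv_mul_of_integrable
        (μ := (volume : Measure V3))
        (f := fun x : V3 => (starRingEnd ℂ) (W x))
        (g := fun y : V3 => NLS18.Gc G i j y * pd j W y)
        (v := EuclideanSpace.single i 1)
        hint1
        ((sdW.conj.mul (sdpdFc i j i)).integrable)
        ((sdW.conj.mul (sdFc i j)).integrable)
        (fun x _ => hconjW_d x) (fun x _ => (hsmFc i j).differentiable NLS18.ple_top x)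
      have hR : (∫ x : V3, fderiv ℝ (fun y : V3 => (starRingEnd ℂ) (W y)) x
            (EuclideanSpace.single i 1) * (NLS18.Gc G i j x * pd j W x))
          = ∫ x : V3, (starRingEnd ℂ) (pd i W x) * (NLS18.Gc G i j x * pd j W x) :=
        integral_congr_ae (Filter.Eventually.of_forall fun x => by beta_reduce; rw [hfdc i x])
      rw [← hR]
      exact hmain
    set y : Fin 3 → Fin 3 → ℂ := fun i j =>
      ∫ x : V3, (starRingEnd ℂ) (pd i W x) * (NLS18.Gc G i j x * pd j W x) with hydef
    have hyconj : ∀ i j, (starRingEnd ℂ) (y i j) = y j i := by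
      intro i j
      show (starRingEnd ℂ) (∫ x : V3, (starRingEnd ℂ) (pd i W x) * (NLS18.Gc G i j x * pd j W x))
        = ∫ x : V3, (starRingEnd ℂ) (pd j W x) * (NLS18.Gc G j i x * pd i W x)
      rw [← integral_conj]
      refine integral_congr_ae (Filter.Eventually.of_forall fun x => ?_)
      beta_reduce
      simp only [map_mul, Complex.conj_conj, Complex.conj_ofReal]
      rw [show G x i j = G x j i from hGa.G_symm x i j]
      ring
    have hterm : ∀ i j : Fin 3,
        (∫ x : V3, 2 * (Complex.I * pd i (fun y' => NLS18.Gc G i j y' * pd j W y') x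
            * (starRingEnd ℂ) (W x)).re)
          = 2 * (y i j).im := by
      intro i j
      have hint : Integrable (fun x : V3 => Complex.I * ((starRingEnd ℂ) (W x)
          * pd i (fun y' => NLS18.Gc G i j y' * pd j W y') x)) (volume : Measure V3) :=
        ((sdW.conj.mul (sdpdFc i j i)).const_mul Complex.I).integrable
      have step1 : (∫ x : V3, 2 * (Complex.I * pd i (fun y' => NLS18.Gc G i j y' * pd j W y') x
            * (starRingEnd ℂ) (W x)).re)
          = ∫ x : V3, 2 * ((Complex.I * ((starRingEnd ℂ) (W x)
              * pd i (fun y' => NLS18.Gc G i j y' * pd j W y') x)).re) :=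
        integral_congr_ae (Filter.Eventually.of_forall fun x => by
          beta_reduce
          rw [show Complex.I * pd i (fun y' => NLS18.Gc G i j y' * pd j W y') x
              * (starRingEnd ℂ) (W x)
            = Complex.I * ((starRingEnd ℂ) (W x)
              * pd i (fun y' => NLS18.Gc G i j y' * pd j W y') x) from by ring])
      have step2 := integral_const_mul (μ := (volume : Measure V3)) (2:ℝ) (fun x : V3 => ((Complex.I * ((starRingEnd ℂ) (W x)
          * pd i (fun y' => NLS18.Gc G i j y' * pd j W y') x)).re))
      have step3 := integral_re hint
      simp only [RCLike.re_to_complex] at step3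
      have step4 := integral_const_mul (μ := (volume : Measure V3)) Complex.I (fun x : V3 => ((starRingEnd ℂ) (W x)
          * pd i (fun y' => NLS18.Gc G i j y' * pd j W y') x))
      rw [step1, step2, step3, step4, hIBP i j]
      have : Complex.I * (- y i j) = -(Complex.I * y i j) := by ring
      rw [this, Complex.neg_re]
      simp [Complex.mul_re]
    have hrwsum : (∫ x : V3, 2 * (Complex.I * divG G W x * (starRingEnd ℂ) (W x)).re)
        = ∑ i, ∑ j, 2 * (y i j).im := by
      rw [integral_congr_ae (Filter.Eventually.of_forall hQrw)]
      rw [integral_finset_sum _ fun i _ => integrable_finset_sum _ fun j _ => (sdq i j).integrable]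
      refine Finset.sum_congr rfl fun i _ => ?_
      rw [integral_finset_sum _ fun j _ => (sdq i j).integrable]
      exact Finset.sum_congr rfl fun j _ => hterm i j
    rw [hrwsum]
    have hYconj : (starRingEnd ℂ) (∑ i, ∑ j, y i j) = ∑ i, ∑ j, y i j := by
      rw [map_sum]
      calc (∑ i, (starRingEnd ℂ) (∑ j, y i j))
          = ∑ i, ∑ j, (starRingEnd ℂ) (y i j) :=
            Finset.sum_congr rfl fun i _ => map_sum _ _ _
        _ = ∑ i, ∑ j, y j i :=
            Finset.sum_congr rfl fun i _ => Finset.sum_congr rfl fun j _ => hyconj i j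
        _ = ∑ i, ∑ j, y i j := Finset.sum_comm
    have hYim : (∑ i, ∑ j, y i j).im = 0 := Complex.conj_eq_iff_im.mp hYconj
    have : (∑ i, ∑ j : Fin 3, 2 * (y i j).im) = 2 * (∑ i, ∑ j : Fin 3, y i j).im := by
      rw [Complex.im_sum, Finset.mul_sum]
      refine Finset.sum_congr rfl fun i _ => ?_
      rw [Complex.im_sum, Finset.mul_sum]
    rw [this, hYim, mul_zero]
  have hRle : (∫ x : V3, (-2) * a x * ‖W x‖^2) ≤ 0 := by
    apply integral_nonpos
    intro x
    have := hGa.a_nonneg x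
    have h2 : (0:ℝ) ≤ ‖W x‖^2 := by positivity
    simp only [Pi.zero_apply]
    nlinarith
  have hPle : (∫ x : V3, 2 * ((-Complex.I) * N x * (starRingEnd ℂ) (W x)).re)
      ≤ ∫ x : V3, 3 * ((‖u t x‖^2 + ‖v t x‖^2) * ‖u t x - v t x‖^2) := by
    refine integral_mono hPint (sdRHS.const_mulR 3).integrable fun x => ?_
    show 2 * ((-Complex.I) * N x * (starRingEnd ℂ) (W x)).re
      ≤ 3 * ((‖u t x‖^2 + ‖v t x‖^2) * ‖W x‖^2)
    have h1 : ((-Complex.I) * N x * (starRingEnd ℂ) (W x)).re ≤ ‖N x‖ * ‖W x‖ := by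
      have h2 : ((-Complex.I) * N x * (starRingEnd ℂ) (W x)).re
          ≤ ‖(-Complex.I) * N x * (starRingEnd ℂ) (W x)‖ := Complex.re_le_norm _
      have h3 : ‖(-Complex.I) * N x * (starRingEnd ℂ) (W x)‖ = ‖N x‖ * ‖W x‖ := by
        rw [norm_mul, norm_mul, norm_neg, Complex.norm_I, one_mul, RCLike.norm_conj]
      linarith
    have hNle : ‖N x‖ ≤ ‖u t x‖^2 * ‖W x‖ + (‖u t x‖ + ‖v t x‖) * ‖W x‖ * ‖v t x‖ := by
      have hN2 : N x = (‖u t x‖:ℂ)^2 * W x + ((‖u t x‖:ℂ)^2 - (‖v t x‖:ℂ)^2) * v t x := by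
        rw [hNdef, hWdef]
        ring
      rw [hN2]
      refine le_trans (norm_add_le _ _) (add_le_add (le_of_eq ?_) ?_)
      · rw [norm_mul, norm_pow, Complex.norm_real, Real.norm_eq_abs, abs_norm]
      · rw [norm_mul]
        have e1 : ((‖u t x‖:ℂ)^2 - (‖v t x‖:ℂ)^2) = (((‖u t x‖^2 - ‖v t x‖^2 : ℝ)):ℂ) := by
          push_cast
          ring
        have e2 : ‖((‖u t x‖^2 - ‖v t x‖^2 : ℝ) : ℂ)‖ ≤ (‖u t x‖ + ‖v t x‖) * ‖W x‖ := by
          rw [Complex.norm_real, Real.norm_eq_abs]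
          have habs : |‖u t x‖^2 - ‖v t x‖^2| = |‖u t x‖ - ‖v t x‖| * (‖u t x‖ + ‖v t x‖) := by
            rw [← abs_of_nonneg (show (0:ℝ) ≤ ‖u t x‖ + ‖v t x‖ by positivity), ← abs_mul]
            congr 1
            ring
          have h3 : |‖u t x‖ - ‖v t x‖| ≤ ‖W x‖ := by
            rw [hWdef]
            exact abs_norm_sub_norm_le _ _
          rw [habs]
          calc |‖u t x‖ - ‖v t x‖| * (‖u t x‖ + ‖v t x‖)
              ≤ ‖W x‖ * (‖u t x‖ + ‖v t x‖) := by gcongr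
            _ = (‖u t x‖ + ‖v t x‖) * ‖W x‖ := by ring
        rw [e1]
        exact mul_le_mul_of_nonneg_right e2 (norm_nonneg _)
    have h4 : ‖N x‖ * ‖W x‖ ≤ (‖u t x‖^2 * ‖W x‖ + (‖u t x‖ + ‖v t x‖) * ‖W x‖ * ‖v t x‖) * ‖W x‖ :=
      mul_le_mul_of_nonneg_right hNle (norm_nonneg _)
    nlinarith [h1, h4, sq_nonneg (‖u t x‖ - ‖v t x‖), sq_nonneg ‖W x‖, norm_nonneg (W x),
      mul_nonneg (sq_nonneg (‖u t x‖ - ‖v t x‖)) (sq_nonneg ‖W x‖)]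
  calc (∫ x : V3, 2 * ((timeDeriv u t x - timeDeriv v t x)
          * (starRingEnd ℂ) (u t x - v t x)).re)
      = ∫ x : V3, (2 * ((-Complex.I) * N x * (starRingEnd ℂ) (W x)).re
          + 2 * (Complex.I * divG G W x * (starRingEnd ℂ) (W x)).re
          + (-2) * a x * ‖W x‖^2) := integral_congr_ae (Filter.Eventually.of_forall hdecomp)
    _ = (∫ x : V3, 2 * ((-Complex.I) * N x * (starRingEnd ℂ) (W x)).re)
          + (∫ x : V3, 2 * (Complex.I * divG G W x * (starRingEnd ℂ) (W x)).re)
          + ∫ x : V3, (-2) * a x * ‖W x‖^2 := by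
        have h1 := integral_add (μ := (volume : Measure V3))
          (f := fun x => 2 * ((-Complex.I) * N x * (starRingEnd ℂ) (W x)).re
            + 2 * (Complex.I * divG G W x * (starRingEnd ℂ) (W x)).re)
          (g := fun x => (-2) * a x * ‖W x‖^2) (hPint.add hQint) hRint
        have h2 := integral_add (μ := (volume : Measure V3))
          (f := fun x => 2 * ((-Complex.I) * N x * (starRingEnd ℂ) (W x)).re)
          (g := fun x => 2 * (Complex.I * divG G W x * (starRingEnd ℂ) (W x)).re) hPint hQint
        calc (∫ x : V3, (2 * ((-Complex.I) * N x * (starRingEnd ℂ) (W x)).re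
              + 2 * (Complex.I * divG G W x * (starRingEnd ℂ) (W x)).re
              + (-2) * a x * ‖W x‖^2))
            = (∫ x : V3, (2 * ((-Complex.I) * N x * (starRingEnd ℂ) (W x)).re
              + 2 * (Complex.I * divG G W x * (starRingEnd ℂ) (W x)).re))
              + ∫ x : V3, (-2) * a x * ‖W x‖^2 := h1
          _ = (∫ x : V3, 2 * ((-Complex.I) * N x * (starRingEnd ℂ) (W x)).re)
              + (∫ x : V3, 2 * (Complex.I * divG G W x * (starRingEnd ℂ) (W x)).re)
              + ∫ x : V3, (-2) * a x * ‖W x‖^2 := by rw [h2]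
    _ ≤ (∫ x : V3, 3 * ((‖u t x‖^2 + ‖v t x‖^2) * ‖u t x - v t x‖^2)) + 0 + 0 := by
        exact add_le_add (add_le_add hPle (le_of_eq hQzero)) hRle
    _ = ∫ x : V3, 3 * ((‖u t x‖^2 + ‖v t x‖^2) * ‖u t x - v t x‖^2) := by ring
    _ = 3 * ∫ x : V3, (‖u t x‖^2 + ‖v t x‖^2) * ‖u t x - v t x‖^2 :=
        integral_const_mul 3 _
end
end
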